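/- Let X be a real random variable and β ∈ (0,4). If P(X > V) ≤ C₁ e^{−4t} e^{−4V} · e^{8t} for all V ∈ ℝ (i.e. P(X>V) ≤ C₁ e^{4t−4V}), and P(X > V) ≤ C₂ e^{−V²/t}/√t for all V ∈ [βt/8, (3+β/4)t/2], then E[e^{βX}] ≤ C(β) e^{β² t/4} for some constant C(β) depending only on β, C₁, C₂, uniformly in t ≥ 1. -/

import Mathlib

open MeasureTheory Set Filter

-- Auxiliary: ∫ v in Ioi a, exp (-c*v) = exp (-c*a)/c for c > 0
lemma exp_tail_integral (c a : ℝ) (hc : 0 < c) :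
    ∫ v in Set.Ioi a, Real.exp (-c * v) = Real.exp (-c * a) / c := by
  have hderiv : ∀ x ∈ Set.Ici a, HasDerivAt (fun x => -(Real.exp (-c * x) / c))
      (Real.exp (-c * x)) x := by
    intro x _
    have h1 : HasDerivAt (fun x : ℝ => -c * x) (-c) x := by simpa using (hasDerivAt_id x).const_mul (-c)
    have h2 := h1.exp
    have h3 := (h2.div_const c).neg
    convert h3 using 1
    all_goals first | rfl | field_simp
  have hint : IntegrableOn (fun x : ℝ => Real.exp (-c * x)) (Set.Ioi a) :=
    exp_neg_integrableOn_Ioi a hc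
  have htend : Tendsto (fun x => -(Real.exp (-c * x) / c)) atTop (nhds 0) := by
    have h1 : Tendsto (fun x : ℝ => c * x) atTop atTop :=
      Tendsto.const_mul_atTop hc tendsto_id
    have h2 : Tendsto (fun x : ℝ => Real.exp (-(c * x))) atTop (nhds 0) :=
      Real.tendsto_exp_neg_atTop_nhds_zero.comp h1
    have h3 : Tendsto (fun x : ℝ => Real.exp (-c * x)) atTop (nhds 0) := by
      simpa [neg_mul] using h2
    simpa using (h3.div_const c).neg
  have := MeasureTheory.integral_Ioi_of_hasDerivAt_of_tendsto' hderiv hint htend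
  rw [this]
  ring

theorem stmt_7 (β C₁ C₂ : ℝ) (hβ : 0 < β) (hβ4 : β < 4) (hC₁ : 0 < C₁) (hC₂ : 0 < C₂) :
    ∃ C : ℝ, 0 < C ∧
      ∀ (t : ℝ), 1 ≤ t →
      ∀ (Ω : Type) (_ : MeasurableSpace Ω) (μ : Measure Ω), IsProbabilityMeasure μ →
      ∀ (X : Ω → ℝ), Measurable X →
      (∀ V : ℝ, (μ {ω | X ω > V}).toReal ≤ C₁ * Real.exp (4 * t - 4 * V)) →
      (∀ V : ℝ, V ∈ Set.Icc (β * t / 8) ((3 + β / 4) * t / 2) →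
        (μ {ω | X ω > V}).toReal ≤ C₂ * Real.exp (-V ^ 2 / t) / Real.sqrt t) →
      ∫ ω, Real.exp (β * X ω) ∂μ ≤ C * Real.exp (β ^ 2 * t / 4) := by
  have h4βg : (0:ℝ) < 4 - β := by linarith
  refine ⟨1 + C₂ * β * Real.sqrt Real.pi + C₁ * β / (4 - β), by positivity, ?_⟩
  intro t ht Ω mΩ μ hμ X hX hTail hGauss
  have ht0 : (0 : ℝ) < t := lt_of_lt_of_le one_pos ht
  set V₁ : ℝ := β * t / 8 with hV₁def
  have hV₁pos : 0 < V₁ := by positivity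
  set Y : Ω → ℝ := fun ω => max (X ω - V₁) 0 with hYdef
  have hY : Measurable Y := (hX.sub measurable_const).max measurable_const
  have hYnn : ∀ ω, 0 ≤ Y ω := fun ω => le_max_right _ _
  -- antiderivative identity
  have hG : ∀ y : ℝ, ∫ v in (0:ℝ)..y, β * Real.exp (β * v) = Real.exp (β * y) - 1 := by
    intro y
    have hd : ∀ v ∈ Set.uIcc (0:ℝ) y, HasDerivAt (fun v => Real.exp (β * v))
        (β * Real.exp (β * v)) v := by
      intro v _
      have h1 : HasDerivAt (fun v : ℝ => β * v) β v := by simpa using (hasDerivAt_id v).const_mul β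
      simpa [mul_comm] using h1.exp
    have hi : IntervalIntegrable (fun v => β * Real.exp (β * v)) volume 0 y :=
      (Continuous.mul continuous_const (Real.continuous_exp.comp
        (continuous_const.mul continuous_id))).intervalIntegrable 0 y
    have := intervalIntegral.integral_eq_sub_of_hasDerivAt hd hi
    set_option linter.unnecessarySimpa false in
    simpa using this
  -- layercake
  have key := MeasureTheory.lintegral_comp_eq_lintegral_meas_lt_mul μ
    (f := Y) (g := fun v => β * Real.exp (β * v))
    (Filter.Eventually.of_forall hYnn) hY.aemeasurable
    (fun s _ => (Continuous.mul continuous_const (Real.continuous_exp.comp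
        (continuous_const.mul continuous_id))).intervalIntegrable 0 s)
    (Filter.Eventually.of_forall (fun v => by positivity))
  set L : ENNReal := ∫⁻ v in Set.Ioi (0:ℝ),
      μ {a | v < Y a} * ENNReal.ofReal (β * Real.exp (β * v)) with hLdef
  -- Step: ∫⁻ ofReal(exp(βY)) = L + 1
  have hYint : ∫⁻ ω, ENNReal.ofReal (Real.exp (β * Y ω)) ∂μ = L + 1 := by
    have pt : ∀ ω, ENNReal.ofReal (Real.exp (β * Y ω)) =
        ENNReal.ofReal (∫ v in (0:ℝ)..(Y ω), β * Real.exp (β * v)) + 1 := by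
      intro ω
      rw [hG (Y ω)]
      have h1 : (1:ℝ) ≤ Real.exp (β * Y ω) := Real.one_le_exp (by positivity)
      rw [← ENNReal.ofReal_one, ← ENNReal.ofReal_add (by linarith) zero_le_one]
      congr 1
      ring
    rw [lintegral_congr pt, lintegral_add_right _ measurable_const, key, lintegral_const,
      measure_univ, mul_one]
  -- Step: pointwise exp(βX) ≤ exp(βV₁) * exp(βY)
  have hptX : ∀ ω, Real.exp (β * X ω) ≤ Real.exp (β * V₁) * Real.exp (β * Y ω) := by
    intro ω
    rw [← Real.exp_add]
    apply Real.exp_le_exp.2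
    have : X ω - V₁ ≤ Y ω := le_max_left _ _
    nlinarith
  have hXle : ∫⁻ ω, ENNReal.ofReal (Real.exp (β * X ω)) ∂μ ≤
      ENNReal.ofReal (Real.exp (β * V₁)) * (L + 1) := by
    calc ∫⁻ ω, ENNReal.ofReal (Real.exp (β * X ω)) ∂μ
        ≤ ∫⁻ ω, ENNReal.ofReal (Real.exp (β * V₁)) * ENNReal.ofReal (Real.exp (β * Y ω)) ∂μ := by
          refine lintegral_mono fun ω => ?_
          dsimp only
          rw [← ENNReal.ofReal_mul (Real.exp_pos _).le]
          exact ENNReal.ofReal_le_ofReal (hptX ω)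
      _ = ENNReal.ofReal (Real.exp (β * V₁)) * ∫⁻ ω, ENNReal.ofReal (Real.exp (β * Y ω)) ∂μ :=
          lintegral_const_mul _ (ENNReal.measurable_ofReal.comp
            (Real.measurable_exp.comp (hY.const_mul β)))
      _ = ENNReal.ofReal (Real.exp (β * V₁)) * (L + 1) := by rw [hYint]
  -- identify sets
  have hsets : ∀ v : ℝ, 0 < v → {a | v < Y a} = {ω | X ω > v + V₁} := by
    intro v hv
    ext ω
    simp only [Set.mem_setOf_eq, hYdef, lt_max_iff]
    constructor
    · rintro (h | h)
      · exact lt_sub_iff_add_lt.mp h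
      · exact absurd h (not_lt.2 hv.le)
    · intro h
      exact Or.inl (lt_sub_iff_add_lt.mpr h)
  -- split point
  set a : ℝ := 3 * t / 2 with hadef
  have ha0 : (0:ℝ) < a := by positivity
  -- split L
  have hLsplit : L = (∫⁻ v in Set.Ioc (0:ℝ) a,
      μ {a' | v < Y a'} * ENNReal.ofReal (β * Real.exp (β * v))) +
      ∫⁻ v in Set.Ioi a, μ {a' | v < Y a'} * ENNReal.ofReal (β * Real.exp (β * v)) := by
    rw [hLdef, ← Set.Ioc_union_Ioi_eq_Ioi ha0.le,
      lintegral_union measurableSet_Ioi (Set.Ioc_disjoint_Ioi le_rfl)]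
  -- middle bound
  set c : ℝ := β * t / 2 - V₁ with hcdef
  set K : ℝ := C₂ * β * Real.exp (β ^ 2 * t / 4 - β * V₁) / Real.sqrt t with hKdef
  have hst : (0:ℝ) < Real.sqrt t := Real.sqrt_pos.mpr ht0
  have hmidpt : ∀ v ∈ Set.Ioc (0:ℝ) a,
      μ {a' | v < Y a'} * ENNReal.ofReal (β * Real.exp (β * v)) ≤
        ENNReal.ofReal (K * Real.exp (-(1/t) * (v - c) ^ 2)) := by
    intro v hv
    rw [hsets v hv.1]
    have hmem : v + V₁ ∈ Set.Icc (β * t / 8) ((3 + β / 4) * t / 2) := by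
      constructor
      · rw [← hV₁def]; linarith [hv.1]
      · have : v ≤ a := hv.2
        rw [hV₁def] at *
        rw [hadef] at this
        nlinarith
    have hb := hGauss (v + V₁) hmem
    have hμle : μ {ω | X ω > v + V₁} ≤
        ENNReal.ofReal (C₂ * Real.exp (-(v + V₁) ^ 2 / t) / Real.sqrt t) := by
      rw [← ENNReal.ofReal_toReal (measure_ne_top μ _)]
      exact ENNReal.ofReal_le_ofReal hb
    calc μ {ω | X ω > v + V₁} * ENNReal.ofReal (β * Real.exp (β * v))
        ≤ ENNReal.ofReal (C₂ * Real.exp (-(v + V₁) ^ 2 / t) / Real.sqrt t) *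
            ENNReal.ofReal (β * Real.exp (β * v)) :=
          mul_le_mul_left hμle _
      _ = ENNReal.ofReal ((C₂ * Real.exp (-(v + V₁) ^ 2 / t) / Real.sqrt t) *
            (β * Real.exp (β * v))) := by
          rw [← ENNReal.ofReal_mul (by positivity)]
      _ = ENNReal.ofReal (K * Real.exp (-(1/t) * (v - c) ^ 2)) := by
          congr 1
          have hexp : Real.exp (-(v + V₁) ^ 2 / t) * Real.exp (β * v) =
              Real.exp (β ^ 2 * t / 4 - β * V₁) * Real.exp (-(1/t) * (v - c) ^ 2) := by
            rw [← Real.exp_add, ← Real.exp_add]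
            congr 1
            rw [hcdef]
            field_simp
            ring
          calc C₂ * Real.exp (-(v + V₁) ^ 2 / t) / Real.sqrt t * (β * Real.exp (β * v))
              = C₂ * β / Real.sqrt t *
                  (Real.exp (-(v + V₁) ^ 2 / t) * Real.exp (β * v)) := by ring
            _ = C₂ * β / Real.sqrt t * (Real.exp (β ^ 2 * t / 4 - β * V₁) *
                  Real.exp (-(1/t) * (v - c) ^ 2)) := by rw [hexp]
            _ = K * Real.exp (-(1/t) * (v - c) ^ 2) := by rw [hKdef]; ring
  have hgauss_int : Integrable (fun v : ℝ => K * Real.exp (-(1/t) * (v - c) ^ 2)) := by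
    have h1 : Integrable (fun x : ℝ => Real.exp (-(1/t) * x ^ 2)) :=
      integrable_exp_neg_mul_sq (by positivity)
    exact (h1.comp_sub_right c).const_mul K
  have hgauss_val : ∫ v : ℝ, K * Real.exp (-(1/t) * (v - c) ^ 2) =
      C₂ * β * Real.exp (β ^ 2 * t / 4 - β * V₁) * Real.sqrt Real.pi := by
    rw [integral_const_mul]
    rw [integral_sub_right_eq_self (fun x : ℝ => Real.exp (-(1/t) * x ^ 2)) c]
    rw [integral_gaussian]
    have : Real.pi / (1/t) = Real.pi * t := by field_simp
    rw [this, Real.sqrt_mul Real.pi_nonneg]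
    rw [hKdef]
    field_simp
  set m : ℝ := C₂ * β * Real.exp (β ^ 2 * t / 4 - β * V₁) * Real.sqrt Real.pi with hmdef
  have hmid : (∫⁻ v in Set.Ioc (0:ℝ) a,
      μ {a' | v < Y a'} * ENNReal.ofReal (β * Real.exp (β * v))) ≤ ENNReal.ofReal m := by
    calc (∫⁻ v in Set.Ioc (0:ℝ) a,
        μ {a' | v < Y a'} * ENNReal.ofReal (β * Real.exp (β * v)))
        ≤ ∫⁻ v in Set.Ioc (0:ℝ) a, ENNReal.ofReal (K * Real.exp (-(1/t) * (v - c) ^ 2)) :=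
          setLIntegral_mono' measurableSet_Ioc hmidpt
      _ ≤ ∫⁻ v : ℝ, ENNReal.ofReal (K * Real.exp (-(1/t) * (v - c) ^ 2)) :=
          setLIntegral_le_lintegral _ _
      _ = ENNReal.ofReal (∫ v : ℝ, K * Real.exp (-(1/t) * (v - c) ^ 2)) :=
          (ofReal_integral_eq_lintegral_ofReal hgauss_int
            (Filter.Eventually.of_forall (fun v => by positivity))).symm
      _ = ENNReal.ofReal m := by rw [hgauss_val]
  -- tail bound
  set D : ℝ := C₁ * β * Real.exp (4 * t - 4 * V₁) with hDdef
  have htailpt : ∀ v ∈ Set.Ioi a,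
      μ {a' | v < Y a'} * ENNReal.ofReal (β * Real.exp (β * v)) ≤
        ENNReal.ofReal (D * Real.exp (-(4 - β) * v)) := by
    intro v hv
    have hv0 : 0 < v := ha0.trans hv
    rw [hsets v hv0]
    have hb := hTail (v + V₁)
    have hμle : μ {ω | X ω > v + V₁} ≤
        ENNReal.ofReal (C₁ * Real.exp (4 * t - 4 * (v + V₁))) := by
      rw [← ENNReal.ofReal_toReal (measure_ne_top μ _)]
      exact ENNReal.ofReal_le_ofReal hb
    calc μ {ω | X ω > v + V₁} * ENNReal.ofReal (β * Real.exp (β * v))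
        ≤ ENNReal.ofReal (C₁ * Real.exp (4 * t - 4 * (v + V₁))) *
            ENNReal.ofReal (β * Real.exp (β * v)) := mul_le_mul_left hμle _
      _ = ENNReal.ofReal (C₁ * Real.exp (4 * t - 4 * (v + V₁)) * (β * Real.exp (β * v))) := by
          rw [← ENNReal.ofReal_mul (by positivity)]
      _ = ENNReal.ofReal (D * Real.exp (-(4 - β) * v)) := by
          congr 1
          rw [hDdef]
          rw [show C₁ * Real.exp (4 * t - 4 * (v + V₁)) * (β * Real.exp (β * v)) =
            C₁ * β * (Real.exp (4 * t - 4 * (v + V₁)) * Real.exp (β * v)) by ring,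
            ← Real.exp_add,
            show C₁ * β * Real.exp (4 * t - 4 * V₁) * Real.exp (-(4 - β) * v) =
            C₁ * β * (Real.exp (4 * t - 4 * V₁) * Real.exp (-(4 - β) * v)) by ring,
            ← Real.exp_add]
          congr 1
          ring
  have h4β : (0:ℝ) < 4 - β := by linarith
  have htail_int : IntegrableOn (fun v : ℝ => D * Real.exp (-(4 - β) * v)) (Set.Ioi a) :=
    (exp_neg_integrableOn_Ioi a h4β).const_mul D
  set r : ℝ := D * (Real.exp (-(4 - β) * a) / (4 - β)) with hrdef
  have htail : (∫⁻ v in Set.Ioi a,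
      μ {a' | v < Y a'} * ENNReal.ofReal (β * Real.exp (β * v))) ≤ ENNReal.ofReal r := by
    calc (∫⁻ v in Set.Ioi a, μ {a' | v < Y a'} * ENNReal.ofReal (β * Real.exp (β * v)))
        ≤ ∫⁻ v in Set.Ioi a, ENNReal.ofReal (D * Real.exp (-(4 - β) * v)) :=
          setLIntegral_mono' measurableSet_Ioi htailpt
      _ = ENNReal.ofReal (∫ v in Set.Ioi a, D * Real.exp (-(4 - β) * v)) :=
          (ofReal_integral_eq_lintegral_ofReal htail_int
            (Filter.Eventually.of_forall (fun v => by positivity))).symm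
      _ = ENNReal.ofReal r := by
          rw [integral_const_mul, exp_tail_integral (4 - β) a h4β, hrdef]
  -- assemble
  have hmnn : 0 ≤ m := by rw [hmdef]; positivity
  have hrnn : 0 ≤ r := by rw [hrdef]; positivity
  have hmain : ∫⁻ ω, ENNReal.ofReal (Real.exp (β * X ω)) ∂μ ≤
      ENNReal.ofReal (Real.exp (β * V₁) * (m + r + 1)) := by
    calc ∫⁻ ω, ENNReal.ofReal (Real.exp (β * X ω)) ∂μ
        ≤ ENNReal.ofReal (Real.exp (β * V₁)) * (L + 1) := hXle
      _ ≤ ENNReal.ofReal (Real.exp (β * V₁)) *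
          (ENNReal.ofReal m + ENNReal.ofReal r + 1) := by
          apply mul_le_mul_right
          apply add_le_add_left
          rw [hLsplit]
          exact add_le_add hmid htail
      _ = ENNReal.ofReal (Real.exp (β * V₁) * (m + r + 1)) := by
          rw [← ENNReal.ofReal_one, ← ENNReal.ofReal_add hmnn hrnn,
            ← ENNReal.ofReal_add (by linarith) zero_le_one,
            ← ENNReal.ofReal_mul (Real.exp_pos _).le]
  -- final real inequality
  have hreal : Real.exp (β * V₁) * (m + r + 1) ≤
      (1 + C₂ * β * Real.sqrt Real.pi + C₁ * β / (4 - β)) * Real.exp (β ^ 2 * t / 4) := by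
    have h1 : Real.exp (β * V₁) ≤ Real.exp (β ^ 2 * t / 4) := by
      apply Real.exp_le_exp.2
      rw [hV₁def]
      nlinarith
    have h2 : Real.exp (β * V₁) * m = C₂ * β * Real.sqrt Real.pi * Real.exp (β ^ 2 * t / 4) := by
      rw [hmdef, show Real.exp (β * V₁) * (C₂ * β * Real.exp (β ^ 2 * t / 4 - β * V₁) *
        Real.sqrt Real.pi) = C₂ * β * Real.sqrt Real.pi *
        (Real.exp (β * V₁) * Real.exp (β ^ 2 * t / 4 - β * V₁)) by ring, ← Real.exp_add]
      congr 2
      ring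
    have h3 : Real.exp (β * V₁) * r ≤ C₁ * β / (4 - β) * Real.exp (β ^ 2 * t / 4) := by
      have heq : Real.exp (β * V₁) * r = C₁ * β / (4 - β) *
          Real.exp (β * V₁ + (4 * t - 4 * V₁) + -(4 - β) * a) := by
        rw [hrdef, hDdef, Real.exp_add, Real.exp_add]
        field_simp
      rw [heq]
      apply mul_le_mul_of_nonneg_left _ (by positivity)
      apply Real.exp_le_exp.2
      rw [hV₁def, hadef]
      nlinarith [mul_nonneg ht0.le (sq_nonneg (β - 4))]
    nlinarith [Real.exp_pos (β ^ 2 * t / 4), Real.exp_pos (β * V₁), hmnn, hrnn,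
      mul_nonneg (Real.exp_pos (β * V₁)).le hmnn, mul_nonneg (Real.exp_pos (β * V₁)).le hrnn]
  -- conclude
  rw [integral_eq_lintegral_of_nonneg_ae
    (Filter.Eventually.of_forall (fun ω => (Real.exp_pos _).le))
    ((Real.measurable_exp.comp (hX.const_mul β)).aestronglyMeasurable)]
  apply ENNReal.toReal_le_of_le_ofReal (by positivity)
  exact hmain.trans (ENNReal.ofReal_le_ofReal hreal)
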